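/- Let Λ ∈ ℝ^{k×m} have all entries nonnegative, let P ∈ ℝ^{k×k} be symmetric with all entries nonnegative, and suppose −Q − P + ΛFᵀ + FΛᵀ is positive semidefinite. Let M ∈ ℝ be any number such that 2(d + Λw)ᵀy ≤ M for every y ∈ ℝ^k with Fᵀy ≤ w and y ≥ 0. Then for every DNN-feasible matrix X, ⟨Ĥ, X⟩ ≤ v + M. In particular, the optimal value of the DNN relaxation is at most v + max{2(d + Λw)ᵀy : Fᵀy ≤ w, y ≥ 0}. -/

import Mathlib

open Matrix

noncomputable section

/-- Frobenius (trace) inner product of real matrices. -/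
def frob {ι : Type} [Fintype ι] (A B : Matrix ι ι ℝ) : ℝ := (Aᵀ * B).trace

/-- The matrix `M₀ = [Fᵀ  I_m  0]`. -/
def Mzero {k m : ℕ} (F : Matrix (Fin k) (Fin m) ℝ) :
    Matrix (Fin m) ((Fin k ⊕ Fin m) ⊕ Unit) ℝ :=
  Matrix.of fun i j =>
    Sum.elim (Sum.elim (fun a => F a i) (fun b => if b = i then (1 : ℝ) else 0))
      (fun _ => (0 : ℝ)) j

/-- `X` is feasible for the doubly nonnegative (DNN) relaxation with data `(F, w)`. -/
def DNNFeasible {k m : ℕ} (F : Matrix (Fin k) (Fin m) ℝ) (w : Fin m → ℝ)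
    (X : Matrix ((Fin k ⊕ Fin m) ⊕ Unit) ((Fin k ⊕ Fin m) ⊕ Unit) ℝ) : Prop :=
  (∀ i j, 0 ≤ X i j) ∧
  X.PosSemidef ∧
  X (Sum.inr ()) (Sum.inr ()) = 1 ∧
  ((Mzero F).mulVec (fun j => X j (Sum.inr ())) = w) ∧
  (∀ i, (Mzero F * X * (Mzero F)ᵀ) i i = w i * w i)

/-- The objective matrix `Ĥ` of the DNN relaxation. -/
def Hhat {k m : ℕ} (Q : Matrix (Fin k) (Fin k) ℝ) (d : Fin k → ℝ) (v : ℝ) :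
    Matrix ((Fin k ⊕ Fin m) ⊕ Unit) ((Fin k ⊕ Fin m) ⊕ Unit) ℝ :=
  fromBlocks (fromBlocks Q 0 0 0)
    (Matrix.of fun i _ => Sum.elim d (fun _ => (0 : ℝ)) i)
    (Matrix.of fun _ j => Sum.elim d (fun _ => (0 : ℝ)) j)
    (Matrix.of fun _ _ => v)

lemma triple_sum_comm {n : Type} [Fintype n] (f : n → n → n → ℝ) :
    ∑ a, ∑ b, ∑ c, f a b c = ∑ c, ∑ a, ∑ b, f a b c :=
  calc ∑ a, ∑ b, ∑ c, f a b c = ∑ b, ∑ a, ∑ c, f a b c := Finset.sum_comm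
    _ = ∑ b, ∑ c, ∑ a, f a b c := Finset.sum_congr rfl fun _ _ => Finset.sum_comm
    _ = ∑ c, ∑ b, ∑ a, f a b c := Finset.sum_comm
    _ = ∑ c, ∑ a, ∑ b, f a b c := Finset.sum_congr rfl fun _ _ => Finset.sum_comm

lemma sum_mul_psd {n : Type} [Fintype n] [DecidableEq n]
    {S Y : Matrix n n ℝ} (hS : S.PosSemidef) (hY : Y.PosSemidef) :
    0 ≤ ∑ a, ∑ b, S a b * Y a b := by
  open scoped MatrixOrder in
  obtain ⟨R, hR⟩ := CStarAlgebra.nonneg_iff_eq_star_mul_self.mp hY.nonneg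
  have h1 : ∀ c, 0 ≤ ∑ a, R c a * ∑ b, S a b * R c b := by
    intro c
    simpa [dotProduct, mulVec] using hS.dotProduct_mulVec_nonneg (fun a => R c a)
  have h2 : ∑ a, ∑ b, S a b * Y a b = ∑ c, ∑ a, ∑ b, R c a * (S a b * R c b) := by
    subst hR
    rw [← triple_sum_comm (fun a b c => R c a * (S a b * R c b))]
    refine Finset.sum_congr rfl fun a _ => Finset.sum_congr rfl fun b _ => ?_
    simp only [Matrix.mul_apply, star_eq_conjTranspose, conjTranspose_apply, star_trivial, Finset.mul_sum]
    exact Finset.sum_congr rfl fun c _ => by ring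
  rw [h2]
  refine Finset.sum_nonneg fun c _ => ?_
  simpa [Finset.mul_sum] using h1 c

/-- upper bound for the DNN relaxation value from a certificate
`(Λ, P)` with `−Q − P + ΛFᵀ + FΛᵀ ⪰ 0`. -/
theorem dnn_bound_upper_bound {k m : ℕ} (hk : 1 ≤ k) (hm : 1 ≤ m)
    (F : Matrix (Fin k) (Fin m) ℝ) (w : Fin m → ℝ)
    (Q : Matrix (Fin k) (Fin k) ℝ) (hQ : Q.IsSymm) (d : Fin k → ℝ) (v : ℝ)
    (Λ : Matrix (Fin k) (Fin m) ℝ) (hΛ : ∀ i j, 0 ≤ Λ i j)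
    (P : Matrix (Fin k) (Fin k) ℝ) (hPs : P.IsSymm) (hPnn : ∀ i j, 0 ≤ P i j)
    (hpsd : (-Q - P + Λ * Fᵀ + F * Λᵀ).PosSemidef)
    (M : ℝ)
    (hM : ∀ y : Fin k → ℝ, (∀ i, Fᵀ.mulVec y i ≤ w i) → (∀ i, 0 ≤ y i) →
      2 * ((fun i => d i + Λ.mulVec w i) ⬝ᵥ y) ≤ M)
    (X : Matrix ((Fin k ⊕ Fin m) ⊕ Unit) ((Fin k ⊕ Fin m) ⊕ Unit) ℝ)
    (hX : DNNFeasible F w X) :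
    frob (Hhat (m := m) Q d v) X ≤ v + M := by
  obtain ⟨hnn, hpsdX, hee, hcolv, hdiag⟩ := hX
  set ι : Fin k → (Fin k ⊕ Fin m) ⊕ Unit := fun a => Sum.inl (Sum.inl a) with hιdef
  set κ : Fin m → (Fin k ⊕ Fin m) ⊕ Unit := fun c => Sum.inl (Sum.inr c) with hκdef
  set ε : (Fin k ⊕ Fin m) ⊕ Unit := Sum.inr () with hεdef
  have hsym : ∀ r s, X s r = X r s := by
    intro r s
    have h := congrFun (congrFun hpsdX.1 r) s
    simpa [conjTranspose_apply] using h
  -- expansion of dot products against rows of Mzero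
  have hMrow : ∀ (i : Fin m) (g : ((Fin k ⊕ Fin m) ⊕ Unit) → ℝ),
      ∑ j, Mzero F i j * g j = (∑ b, F b i * g (ι b)) + g (κ i) := by
    intro i g
    simp [Mzero, Fintype.sum_sum_type, ite_mul, Finset.sum_ite_eq, ι, κ]
  -- the key identity : X annihilates (row i of M₀) − wᵢ·e
  have hkey : ∀ (i : Fin m) (r : (Fin k ⊕ Fin m) ⊕ Unit),
      (∑ b, F b i * X r (ι b)) = w i * X r ε - X r (κ i) := by
    intro i
    set δ : ((Fin k ⊕ Fin m) ⊕ Unit) → ℝ := fun j => if j = ε then (1 : ℝ) else 0 with hδdef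
    set u : ((Fin k ⊕ Fin m) ⊕ Unit) → ℝ := Mzero F i - w i • δ with hudef
    have hXδ : X *ᵥ δ = fun r => X r ε := by
      funext r
      simp [mulVec, dotProduct, hδdef, mul_ite]
    have e2 : Mzero F i ⬝ᵥ (fun r => X r ε) = w i := by
      have h := congrFun hcolv i
      simpa [mulVec] using h
    have e1 : Mzero F i ⬝ᵥ X *ᵥ Mzero F i = w i * w i := by
      have h := hdiag i
      rw [← h]
      simp only [Matrix.mul_apply, Matrix.transpose_apply, dotProduct, mulVec,
        Finset.sum_mul, Finset.mul_sum]
      rw [Finset.sum_comm]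
      exact Finset.sum_congr rfl fun r _ => Finset.sum_congr rfl fun s _ => by ring
    have e3 : δ ⬝ᵥ (X *ᵥ Mzero F i) = w i := by
      rw [← e2]
      simp only [dotProduct, hδdef, ite_mul, one_mul, zero_mul, Finset.sum_ite_eq']
      simp only [Finset.mem_univ, if_true, mulVec, dotProduct]
      exact Finset.sum_congr rfl fun s _ => by rw [hsym s ε]; ring
    have e4 : δ ⬝ᵥ (X *ᵥ δ) = 1 := by
      rw [hXδ]
      simp [dotProduct, hδdef, ite_mul, hee]
    have hq : star u ⬝ᵥ X *ᵥ u = 0 := by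
      have hsu : star u = u := by funext j; simp
      rw [hsu, hudef]
      simp only [Matrix.mulVec_sub, Matrix.mulVec_smul, sub_dotProduct, dotProduct_sub,
        dotProduct_smul, smul_dotProduct, smul_eq_mul, smul_sub]
      rw [e1, e3, e4, hXδ, e2]
      ring
    have hu : X *ᵥ u = 0 := (hpsdX.dotProduct_mulVec_zero_iff u).mp hq
    intro r
    have h := congrFun hu r
    rw [hudef, Matrix.mulVec_sub, Matrix.mulVec_smul, hXδ] at h
    simp only [Pi.sub_apply, Pi.smul_apply, smul_eq_mul, Pi.zero_apply] at h
    have hXM : (X *ᵥ Mzero F i) r = (∑ b, F b i * X r (ι b)) + X r (κ i) := by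
      rw [← hMrow i (fun j => X r j)]
      simp only [mulVec, dotProduct]
      exact Finset.sum_congr rfl fun j _ => by ring
    rw [hXM] at h
    linarith
  -- the candidate primal point
  set x : Fin k → ℝ := fun a => X (ι a) ε with hxdef
  have hx1 : ∀ a, 0 ≤ x a := fun a => hnn _ _
  have hx2 : ∀ i, Fᵀ.mulVec x i ≤ w i := by
    intro i
    have h := hkey i ε
    have h2 : Fᵀ.mulVec x i = ∑ b, F b i * X ε (ι b) := by
      simp only [mulVec, dotProduct, transpose_apply, hxdef]
      exact Finset.sum_congr rfl fun b _ => by rw [hsym ε (ι b)]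
    have h3 : 0 ≤ X ε (κ i) := hnn _ _
    rw [h2, h, hee]
    linarith
  have hMx : 2 * ((fun a => d a + Λ.mulVec w a) ⬝ᵥ x) ≤ M := hM x hx2 hx1
  -- expansion of the objective
  have hfrob : frob (Hhat (m := m) Q d v) X
      = (∑ a, ∑ b, Q a b * X (ι a) (ι b)) + 2 * (∑ a, d a * x a) + v := by
    simp only [frob, Matrix.trace, Matrix.diag, Matrix.mul_apply, transpose_apply,
      Fintype.sum_sum_type, Hhat, fromBlocks_apply₁₁, fromBlocks_apply₁₂,
      fromBlocks_apply₂₁, fromBlocks_apply₂₂, of_apply, Sum.elim_inl, Sum.elim_inr,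
      Matrix.zero_apply, zero_mul, Finset.sum_const_zero, add_zero, zero_add,
      Fintype.sum_unique]
    rw [Finset.sum_add_distrib, hee, mul_one]
    have hd : (∑ b, d b * X ε (ι b)) = ∑ a, d a * x a :=
      Finset.sum_congr rfl fun b _ => by rw [← hsym ε (ι b)]
    rw [hd, Finset.sum_comm (f := fun a b => Q a b * X (ι a) (ι b))]
    ring
  -- the PSD submatrix
  have hY : (X.submatrix ι ι).PosSemidef := hpsdX.submatrix ι
  have hS : 0 ≤ ∑ a, ∑ b, (-Q - P + Λ * Fᵀ + F * Λᵀ) a b * X (ι a) (ι b) := by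
    have h := sum_mul_psd hpsd hY
    simpa [Matrix.submatrix_apply] using h
  have hsplit : ∑ a, ∑ b, (-Q - P + Λ * Fᵀ + F * Λᵀ) a b * X (ι a) (ι b)
      = -(∑ a, ∑ b, Q a b * X (ι a) (ι b)) - (∑ a, ∑ b, P a b * X (ι a) (ι b))
        + (∑ a, ∑ b, (Λ * Fᵀ) a b * X (ι a) (ι b))
        + (∑ a, ∑ b, (F * Λᵀ) a b * X (ι a) (ι b)) := by
    simp only [Matrix.add_apply, Matrix.sub_apply, Matrix.neg_apply, add_mul, sub_mul,
      neg_mul, Finset.sum_add_distrib, Finset.sum_sub_distrib, Finset.sum_neg_distrib]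
  have hPY : 0 ≤ ∑ a, ∑ b, P a b * X (ι a) (ι b) :=
    Finset.sum_nonneg fun a _ => Finset.sum_nonneg fun b _ =>
      mul_nonneg (hPnn a b) (hnn _ _)
  have hswap : ∑ a, ∑ b, (F * Λᵀ) a b * X (ι a) (ι b)
      = ∑ a, ∑ b, (Λ * Fᵀ) a b * X (ι a) (ι b) := by
    rw [Finset.sum_comm]
    refine Finset.sum_congr rfl fun a _ => Finset.sum_congr rfl fun b _ => ?_
    rw [hsym (ι a) (ι b)]
    congr 1
    simp only [Matrix.mul_apply, transpose_apply]
    exact Finset.sum_congr rfl fun i _ => by ring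
  have hLFY : ∑ a, ∑ b, (Λ * Fᵀ) a b * X (ι a) (ι b) ≤ ∑ a, (Λ *ᵥ w) a * x a := by
    have step1 : ∀ a, ∑ b, (Λ * Fᵀ) a b * X (ι a) (ι b)
        = ∑ i, Λ a i * (w i * x a - X (ι a) (κ i)) := by
      intro a
      have e : ∑ b, (Λ * Fᵀ) a b * X (ι a) (ι b)
          = ∑ b, ∑ i, Λ a i * (F b i * X (ι a) (ι b)) := by
        refine Finset.sum_congr rfl fun b _ => ?_
        simp only [Matrix.mul_apply, transpose_apply, Finset.sum_mul]
        exact Finset.sum_congr rfl fun i _ => by ring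
      rw [e, Finset.sum_comm]
      refine Finset.sum_congr rfl fun i _ => ?_
      rw [← Finset.mul_sum, hkey i (ι a)]
    calc ∑ a, ∑ b, (Λ * Fᵀ) a b * X (ι a) (ι b)
        = ∑ a, ∑ i, Λ a i * (w i * x a - X (ι a) (κ i)) :=
          Finset.sum_congr rfl fun a _ => step1 a
      _ ≤ ∑ a, ∑ i, Λ a i * (w i * x a) := by
          refine Finset.sum_le_sum fun a _ => Finset.sum_le_sum fun i _ => ?_
          have := hnn (ι a) (κ i)
          have := hΛ a i
          nlinarith
      _ = ∑ a, (Λ *ᵥ w) a * x a := by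
          refine Finset.sum_congr rfl fun a _ => ?_
          simp only [mulVec, dotProduct, Finset.sum_mul]
          exact Finset.sum_congr rfl fun i _ => by ring
  have hQY : ∑ a, ∑ b, Q a b * X (ι a) (ι b) ≤ 2 * ∑ a, (Λ *ᵥ w) a * x a := by
    rw [hsplit, hswap] at hS
    linarith
  have hdot : (fun a => d a + (Λ *ᵥ w) a) ⬝ᵥ x
      = (∑ a, d a * x a) + ∑ a, (Λ *ᵥ w) a * x a := by
    simp [dotProduct, add_mul, Finset.sum_add_distrib]
  rw [hfrob]
  rw [hdot] at hMx
  linarith
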